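/- Let R(u,v,w) be the Cayley parametrization of rotations and fix a unit vector t with δ = u t₁ + v t₂ + w t₃ ≠ 0. The map (u,v,w) ↦ (u',v',w') given by u' = (−t₁ − v t₃ + w t₂)/δ, v' = (−t₂ − w t₁ + u t₃)/δ, w' = (−t₃ − u t₂ + v t₁)/δ is an involution: applying it twice returns (u,v,w). -/

import Mathlib

/-- the map `(u,v,w) ↦ (u',v',w')` of Proposition 2 is an involution. -/
theorem stmt16 (t : Fin 3 → ℝ) (u v w : ℝ)
    (ht : t 0 ^ 2 + t 1 ^ 2 + t 2 ^ 2 = 1)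
    (hδ : u * t 0 + v * t 1 + w * t 2 ≠ 0)
    (hδ' : ((-t 0 - v * t 2 + w * t 1) / (u * t 0 + v * t 1 + w * t 2)) * t 0 +
           ((-t 1 - w * t 0 + u * t 2) / (u * t 0 + v * t 1 + w * t 2)) * t 1 +
           ((-t 2 - u * t 1 + v * t 0) / (u * t 0 + v * t 1 + w * t 2)) * t 2 ≠ 0) :
    let δ := u * t 0 + v * t 1 + w * t 2
    let u' := (-t 0 - v * t 2 + w * t 1) / δ
    let v' := (-t 1 - w * t 0 + u * t 2) / δ
    let w' := (-t 2 - u * t 1 + v * t 0) / δ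
    let δ' := u' * t 0 + v' * t 1 + w' * t 2
    (-t 0 - v' * t 2 + w' * t 1) / δ' = u ∧
    (-t 1 - w' * t 0 + u' * t 2) / δ' = v ∧
    (-t 2 - u' * t 1 + v' * t 0) / δ' = w := by
  intro δ u' v' w' δ'
  have hδ0 : δ ≠ 0 := hδ
  have hδ'2 : δ' ≠ 0 := hδ'
  have hδ'' : δ' = -1 / δ := by
    show u' * t 0 + v' * t 1 + w' * t 2 = -1 / δ
    unfold u' v' w'
    field_simp
    linear_combination (-1) * ht
  refine ⟨?_, ?_, ?_⟩ <;>
  [ (rw [hδ'']; simp only [u', v', w']; field_simp; simp only [δ]; linear_combination u * ht);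
    (rw [hδ'']; simp only [u', v', w']; field_simp; simp only [δ]; linear_combination v * ht);
    (rw [hδ'']; simp only [u', v', w']; field_simp; simp only [δ]; linear_combination w * ht) ]
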